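/- (Stationarity of the discretised Langevin velocity.) Consider the discrete Langevin process of the context with parameters γ, k, τ > 0. Then for every n ≥ 0 the velocity U_n has law N(0, kγ). -/

import Mathlib

open MeasureTheory ProbabilityTheory

/-- `φ(x) = (1 - exp(-x))/x`. -/
noncomputable def phi (x : ℝ) : ℝ := (1 - Real.exp (-x)) / x

/-- The discrete Langevin process with parameters `γ, k, τ`: an initial velocity
`U₀ ~ N(0, kγ)`, together with an i.i.d. sequence `(ε_n)` of 2-dimensional Gaussian
random vectors `ε_n = (ε_n¹, ε_n²)` with mean zero and covariance matrix `C` given by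
`C₁₁ = 2kτ(1 - 2φ(γτ) + φ(2γτ))`, `C₁₂ = C₂₁ = k(γτφ(γτ))²`, `C₂₂ = 2kγ²τφ(2γτ)`
(specified via the laws of all linear functionals), the whole sequence being
independent of `U₀`. -/
structure DiscreteLangevin {Ω : Type*} [MeasurableSpace Ω] (P : Measure Ω)
    (γ k τ : ℝ) where
  U0 : Ω → ℝ
  ε : ℕ → Ω → ℝ × ℝ
  meas_U0 : Measurable U0
  meas_ε : ∀ n, Measurable (ε n)
  law_U0 : P.map U0 = gaussianReal 0 (k * γ).toNNReal
  law_ε : ∀ (n : ℕ) (a b : ℝ),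
    P.map (fun ω => a * (ε n ω).1 + b * (ε n ω).2)
      = gaussianReal 0 (a ^ 2 * (2 * k * τ * (1 - 2 * phi (γ * τ) + phi (2 * γ * τ)))
          + 2 * a * b * (k * (γ * τ * phi (γ * τ)) ^ 2)
          + b ^ 2 * (2 * k * γ ^ 2 * τ * phi (2 * γ * τ))).toNNReal
  indep_ε : iIndepFun ε P
  indep_U0 : IndepFun U0 (fun ω => fun n => ε n ω) P

/-- The velocities of the discrete Langevin process:
`U_{n+1} = exp(-γτ)·U_n + ε_n²`. -/
noncomputable def DiscreteLangevin.U {Ω : Type*} [MeasurableSpace Ω] {P : Measure Ω}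
    {γ k τ : ℝ} (L : DiscreteLangevin P γ k τ) : ℕ → Ω → ℝ
  | 0 => L.U0
  | n + 1 => fun ω => Real.exp (-(γ * τ)) * L.U n ω + (L.ε n ω).2

/-- The displacements of the discrete Langevin process:
`ΔX_n = τφ(γτ)·U_n + ε_n¹`. -/
noncomputable def DiscreteLangevin.ΔX {Ω : Type*} [MeasurableSpace Ω] {P : Measure Ω}
    {γ k τ : ℝ} (L : DiscreteLangevin P γ k τ) (n : ℕ) : Ω → ℝ :=
  fun ω => τ * phi (γ * τ) * L.U n ω + (L.ε n ω).1


section AuxiliaryLemmas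

open Real
open scoped NNReal ENNReal

lemma gaussianPDFReal_conv_eq {v w : ℝ≥0} (hv : v ≠ 0) (hw : w ≠ 0) (z x : ℝ) :
    gaussianPDFReal 0 v x * gaussianPDFReal 0 w (z - x)
      = gaussianPDFReal 0 (v + w) z *
        gaussianPDFReal ((v : ℝ) * z / ((v : ℝ) + (w : ℝ)))
          (⟨(v : ℝ) * (w : ℝ) / ((v : ℝ) + (w : ℝ)), by positivity⟩) x := by
  have ha : (0:ℝ) < v := lt_of_le_of_ne v.coe_nonneg (by exact_mod_cast (Ne.symm hv))
  have hb : (0:ℝ) < w := lt_of_le_of_ne w.coe_nonneg (by exact_mod_cast (Ne.symm hw))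
  have hab : (0:ℝ) < (v:ℝ) + w := by positivity
  simp only [gaussianPDFReal, NNReal.coe_add, NNReal.coe_mk, sub_zero]
  rw [mul_mul_mul_comm, ← Real.exp_add, mul_mul_mul_comm, ← Real.exp_add]
  have hconst : (√(2 * π * (v:ℝ)))⁻¹ * (√(2 * π * (w:ℝ)))⁻¹
      = (√(2 * π * ((v:ℝ) + w)))⁻¹ * (√(2 * π * ((v:ℝ) * w / ((v:ℝ) + w))))⁻¹ := by
    rw [← mul_inv, ← mul_inv, ← Real.sqrt_mul (by positivity), ← Real.sqrt_mul (by positivity)]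
    congr 1
    congr 1
    field_simp
  have hexp : -x ^ 2 / (2 * (v:ℝ)) + -(z - x) ^ 2 / (2 * (w:ℝ))
      = -z ^ 2 / (2 * ((v:ℝ) + w))
        + -(x - (v:ℝ) * z / ((v:ℝ) + w)) ^ 2 / (2 * ((v:ℝ) * w / ((v:ℝ) + w))) := by
    field_simp
    ring
  rw [hconst, hexp]
  rfl

lemma lintegral_gaussianPDF_conv {v w : ℝ≥0} (hv : v ≠ 0) (hw : w ≠ 0) (z : ℝ) :
    ∫⁻ x, gaussianPDF 0 v x * gaussianPDF 0 w (z - x) = gaussianPDF 0 (v + w) z := by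
  have ha : (0:ℝ) < v := lt_of_le_of_ne v.coe_nonneg (by exact_mod_cast (Ne.symm hv))
  have hb : (0:ℝ) < w := lt_of_le_of_ne w.coe_nonneg (by exact_mod_cast (Ne.symm hw))
  set u : ℝ≥0 := ⟨(v : ℝ) * (w : ℝ) / ((v : ℝ) + (w : ℝ)), by positivity⟩ with hu
  have hu0 : u ≠ 0 := by
    rw [← NNReal.coe_ne_zero, hu]
    show (v:ℝ) * (w:ℝ) / ((v:ℝ) + (w:ℝ)) ≠ 0
    positivity
  set m : ℝ := (v : ℝ) * z / ((v : ℝ) + (w : ℝ)) with hm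
  have h : ∀ x, gaussianPDF 0 v x * gaussianPDF 0 w (z - x)
      = ENNReal.ofReal (gaussianPDFReal 0 (v + w) z * gaussianPDFReal m u x) := by
    intro x
    rw [gaussianPDF, gaussianPDF, ← ENNReal.ofReal_mul (gaussianPDFReal_nonneg _ _ _),
      gaussianPDFReal_conv_eq hv hw z x]
  simp_rw [h]
  rw [← ofReal_integral_eq_lintegral_ofReal ((integrable_gaussianPDFReal m u).const_mul _)
    (ae_of_all _ fun x => mul_nonneg (gaussianPDFReal_nonneg _ _ _) (gaussianPDFReal_nonneg _ _ _)),
    integral_const_mul, integral_gaussianPDFReal_eq_one m hu0, mul_one]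
  rfl

lemma gaussianReal_conv (v w : ℝ≥0) :
    ((gaussianReal 0 v).prod (gaussianReal 0 w)).map (fun p : ℝ × ℝ => p.1 + p.2)
      = gaussianReal 0 (v + w) := by
  by_cases hv : v = 0
  · subst hv
    rw [gaussianReal_zero_var, Measure.dirac_prod,
      Measure.map_map (show Measurable (fun p : ℝ × ℝ => p.1 + p.2) from measurable_fst.add measurable_snd) measurable_prodMk_left]
    simp only [Function.comp_def, zero_add]
    rw [Measure.map_id']
  by_cases hw : w = 0
  · subst hw
    rw [gaussianReal_zero_var, Measure.prod_dirac,
      Measure.map_map (show Measurable (fun p : ℝ × ℝ => p.1 + p.2) from measurable_fst.add measurable_snd) measurable_prodMk_right]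
    simp only [Function.comp_def, add_zero]
    rw [Measure.map_id']
  -- main case
  have hvw : v + w ≠ 0 := by simp [hv]
  ext s hs
  rw [Measure.map_apply (show Measurable (fun p : ℝ × ℝ => p.1 + p.2) from measurable_fst.add measurable_snd) hs,
    Measure.prod_apply ((show Measurable (fun p : ℝ × ℝ => p.1 + p.2) from measurable_fst.add measurable_snd) hs)]
  have hpre : ∀ x : ℝ, (Prod.mk x ⁻¹' ((fun p : ℝ × ℝ => p.1 + p.2) ⁻¹' s))
      = (fun y => x + y) ⁻¹' s := fun x => rfl
  have hinner : ∀ x : ℝ, gaussianReal 0 w ((fun y => x + y) ⁻¹' s)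
      = ∫⁻ z, Set.indicator s (fun z => gaussianPDF 0 w (z - x)) z := by
    intro x
    rw [gaussianReal_apply _ hw, ← lintegral_indicator ((measurable_const_add x) hs) _]
    rw [← (measurePreserving_add_right volume (-x)).lintegral_comp
      ((measurable_gaussianPDF 0 w).indicator ((measurable_const_add x) hs))]
    congr 1
    ext z
    have hmem : (z + -x ∈ (fun y => x + y) ⁻¹' s) ↔ z ∈ s := by
      simp [Set.mem_preimage]
    by_cases hz : z ∈ s
    · rw [Set.indicator_of_mem (hmem.mpr hz), Set.indicator_of_mem hz]
      ring_nf
    · rw [Set.indicator_of_notMem (fun h => hz (hmem.mp h)), Set.indicator_of_notMem hz]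
  simp_rw [hpre, hinner]
  have hF : Measurable (Function.uncurry fun x z =>
      Set.indicator s (fun z => gaussianPDF 0 w (z - x)) z) := by
    have : (Function.uncurry fun x z => Set.indicator s (fun z => gaussianPDF 0 w (z - x)) z)
        = Set.indicator (Prod.snd ⁻¹' s) (fun p : ℝ × ℝ => gaussianPDF 0 w (p.2 - p.1)) := by
      ext p
      rcases p with ⟨x, z⟩
      by_cases hz : z ∈ s <;>
        simp [Function.uncurry, Set.indicator_apply, hz]
    rw [this]
    exact ((measurable_gaussianPDF 0 w).comp (measurable_snd.sub measurable_fst)).indicator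
      (measurable_snd hs)
  rw [gaussianReal_of_var_ne_zero _ hv,
    lintegral_withDensity_eq_lintegral_mul _ (measurable_gaussianPDF 0 v)
      (Measurable.lintegral_prod_right hF)]
  simp only [Pi.mul_apply]
  have hswap : ∫⁻ x, gaussianPDF 0 v x *
        ∫⁻ z, Set.indicator s (fun z => gaussianPDF 0 w (z - x)) z ∂volume ∂volume
      = ∫⁻ z, ∫⁻ x, gaussianPDF 0 v x *
        Set.indicator s (fun z => gaussianPDF 0 w (z - x)) z ∂volume ∂volume := by
    rw [← lintegral_lintegral_swap]
    · congr 1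
      ext x
      exact (lintegral_const_mul _ (hF.comp measurable_prodMk_left)).symm
    · exact ((measurable_gaussianPDF 0 v).comp measurable_fst |>.mul hF).aemeasurable
  rw [hswap]
  have hpt : ∀ z, (∫⁻ x, gaussianPDF 0 v x *
        Set.indicator s (fun z => gaussianPDF 0 w (z - x)) z ∂volume)
      = Set.indicator s (gaussianPDF 0 (v + w)) z := by
    intro z
    by_cases hz : z ∈ s
    · simp only [Set.indicator_of_mem hz]
      exact lintegral_gaussianPDF_conv hv hw z
    · simp [Set.indicator_of_notMem hz]
  simp_rw [hpt]
  rw [lintegral_indicator hs, gaussianReal_apply _ hvw]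

lemma indep_join {Ω : Type*} {mΩ : MeasurableSpace Ω} {P : Measure Ω} [IsProbabilityMeasure P]
    {mA mB mC : MeasurableSpace Ω}
    (hA : mA ≤ mΩ) (hB : mB ≤ mΩ) (hC : mC ≤ mΩ)
    (h1 : Indep mA (mB ⊔ mC) P) (h2 : Indep mB mC P) :
    Indep (mA ⊔ mB) mC P := by
  set p1 : Set (Set Ω) :=
    {s | ∃ a b, MeasurableSet[mA] a ∧ MeasurableSet[mB] b ∧ s = a ∩ b} with hp1def
  have hp1m : ∀ s ∈ p1, MeasurableSet[mΩ] s := by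
    rintro s ⟨a, b, ha, hb, rfl⟩
    exact (hA a ha).inter (hB b hb)
  have hp2m : ∀ s ∈ {s | MeasurableSet[mC] s}, MeasurableSet[mΩ] s := fun s hs => hC s hs
  have hp1 : IsPiSystem p1 := by
    rintro s ⟨a, b, ha, hb, rfl⟩ t ⟨a', b', ha', hb', rfl⟩ _
    refine ⟨a ∩ a', b ∩ b', ha.inter ha', hb.inter hb', ?_⟩
    ext x; simp; tauto
  have hp2 : IsPiSystem {s | MeasurableSet[mC] s} := @MeasurableSpace.isPiSystem_measurableSet Ω mC
  have h1' := (Indep_iff _ _ _).mp h1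
  have h2' := (Indep_iff _ _ _).mp h2
  have hIS : IndepSets p1 {s | MeasurableSet[mC] s} P := by
    rw [IndepSets_iff]
    rintro t1 t2 ⟨a, b, ha, hb, rfl⟩ hc
    have hb' : MeasurableSet[mB ⊔ mC] b := (le_sup_left : mB ≤ mB ⊔ mC) b hb
    have hbc : MeasurableSet[mB ⊔ mC] (b ∩ t2) :=
      hb'.inter ((le_sup_right : mC ≤ mB ⊔ mC) t2 hc)
    calc P (a ∩ b ∩ t2) = P (a ∩ (b ∩ t2)) := by rw [Set.inter_assoc]
      _ = P a * P (b ∩ t2) := h1' a (b ∩ t2) ha hbc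
      _ = P a * (P b * P t2) := by rw [h2' b t2 hb hc]
      _ = P a * P b * P t2 := by rw [mul_assoc]
      _ = P (a ∩ b) * P t2 := by rw [h1' a b ha hb']
  have hgen1 : MeasurableSpace.generateFrom p1 = mA ⊔ mB := by
    refine le_antisymm (MeasurableSpace.generateFrom_le ?_) (sup_le ?_ ?_)
    · rintro s ⟨a, b, ha, hb, rfl⟩
      exact ((le_sup_left : mA ≤ mA ⊔ mB) a ha).inter ((le_sup_right : mB ≤ mA ⊔ mB) b hb)
    · intro s hs
      exact MeasurableSpace.measurableSet_generateFrom
        ⟨s, Set.univ, hs, MeasurableSet.univ, (Set.inter_univ s).symm⟩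
    · intro s hs
      exact MeasurableSpace.measurableSet_generateFrom
        ⟨Set.univ, s, MeasurableSet.univ, hs, (Set.univ_inter s).symm⟩
  have := IndepSets.indep' hp1m hp2m hp1 hp2 hIS
  rwa [hgen1, MeasurableSpace.generateFrom_measurableSet] at this

lemma DiscreteLangevin.meas_U {Ω : Type*} [MeasurableSpace Ω] {P : Measure Ω}
    {γ k τ : ℝ} (L : DiscreteLangevin P γ k τ) (n : ℕ) : Measurable (L.U n) := by
  induction n with
  | zero => exact L.meas_U0
  | succ m ih => exact (ih.const_mul _).add ((L.meas_ε m).snd)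

abbrev DiscreteLangevin.sigU {Ω : Type*} [MeasurableSpace Ω] {P : Measure Ω}
    {γ k τ : ℝ} (L : DiscreteLangevin P γ k τ) : MeasurableSpace Ω :=
  MeasurableSpace.comap L.U0 inferInstance

abbrev DiscreteLangevin.sigE {Ω : Type*} [MeasurableSpace Ω] {P : Measure Ω}
    {γ k τ : ℝ} (L : DiscreteLangevin P γ k τ) (i : ℕ) : MeasurableSpace Ω :=
  MeasurableSpace.comap (L.ε i) inferInstance

lemma DiscreteLangevin.indepFun_U_ε {Ω : Type*} [mΩ : MeasurableSpace Ω] {P : Measure Ω}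
    [IsProbabilityMeasure P] {γ k τ : ℝ} (L : DiscreteLangevin P γ k τ) (n : ℕ) :
    IndepFun (L.U n) (L.ε n) P := by
  have hmU : L.sigU ≤ mΩ := L.meas_U0.comap_le
  have hmE : ∀ i, L.sigE i ≤ mΩ := fun i => (L.meas_ε i).comap_le
  have hE_iIndep : iIndep L.sigE P := L.indep_ε.iIndep
  have hUE : Indep L.sigU (⨆ i, L.sigE i) P := by
    have h := (IndepFun_iff_Indep _ _ _).mp L.indep_U0
    refine indep_of_indep_of_le_right h (iSup_le fun i => ?_)
    have heq : L.ε i = (fun f : ℕ → ℝ × ℝ => f i) ∘ (fun ω => fun n => L.ε n ω) := rfl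
    show MeasurableSpace.comap (L.ε i) inferInstance ≤ _
    rw [heq, ← MeasurableSpace.comap_comp]
    exact MeasurableSpace.comap_mono (measurable_pi_apply i).comap_le
  have key : ∀ m : ℕ, Indep (L.sigU ⊔ ⨆ i ∈ Set.Iio m, L.sigE i) (L.sigE m) P := by
    intro m
    refine indep_join hmU (iSup₂_le fun i _ => hmE i) (hmE m) ?_ ?_
    · refine indep_of_indep_of_le_right hUE (sup_le (iSup₂_le fun i _ => ?_) ?_)
      · exact le_iSup L.sigE i
      · exact le_iSup L.sigE m
    · have h := indep_iSup_of_disjoint hmE hE_iIndep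
        (S := Set.Iio m) (T := {m}) (by simp)
      simpa using h
  have hUmeas : ∀ m : ℕ, Measurable[L.sigU ⊔ ⨆ i ∈ Set.Iio m, L.sigE i] (L.U m) := by
    intro m
    induction m with
    | zero =>
      have h0 : Measurable[L.sigU] L.U0 := Measurable.of_comap_le le_rfl
      exact h0.mono le_sup_left le_rfl
    | succ j ih =>
      have hle : (L.sigU ⊔ ⨆ i ∈ Set.Iio j, L.sigE i)
          ≤ L.sigU ⊔ ⨆ i ∈ Set.Iio (j + 1), L.sigE i := by
        refine sup_le_sup_left ?_ _
        refine iSup₂_le fun i hi => ?_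
        exact le_iSup₂ (f := fun i (_ : i ∈ Set.Iio (j + 1)) => L.sigE i) i
          (Set.mem_Iio.mpr (Nat.lt_succ_of_lt (Set.mem_Iio.mp hi)))
      have h1 : Measurable[L.sigU ⊔ ⨆ i ∈ Set.Iio (j + 1), L.sigE i] (L.U j) :=
        (ih.mono hle le_rfl : _)
      have h2 : Measurable[L.sigU ⊔ ⨆ i ∈ Set.Iio (j + 1), L.sigE i] (L.ε j) := by
        have hej : Measurable[L.sigE j] (L.ε j) := Measurable.of_comap_le le_rfl
        refine hej.mono (le_trans ?_ le_sup_right) le_rfl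
        exact le_iSup₂ (f := fun i (_ : i ∈ Set.Iio (j + 1)) => L.sigE i) j
          (Set.mem_Iio.mpr (Nat.lt_succ_self j))
      exact (h1.const_mul _).add h2.snd
  rw [IndepFun_iff_Indep]
  exact indep_of_indep_of_le_left (key n) ((measurable_iff_comap_le).mp (hUmeas n))

lemma indep_gauss_add {Ω : Type*} [MeasurableSpace Ω] {P : Measure Ω} [IsProbabilityMeasure P]
    {X Y : Ω → ℝ} (hX : Measurable X) (hY : Measurable Y) (h : IndepFun X Y P)
    {v w : ℝ≥0} (hXl : P.map X = gaussianReal 0 v) (hYl : P.map Y = gaussianReal 0 w) :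
    P.map (fun ω => X ω + Y ω) = gaussianReal 0 (v + w) := by
  have hmap := (indepFun_iff_map_prod_eq_prod_map_map hX.aemeasurable hY.aemeasurable).mp h
  have hcomp : (fun ω => X ω + Y ω)
      = (fun p : ℝ × ℝ => p.1 + p.2) ∘ (fun ω => (X ω, Y ω)) := rfl
  rw [hcomp, ← Measure.map_map (show Measurable (fun p : ℝ × ℝ => p.1 + p.2) from measurable_fst.add measurable_snd) (hX.prodMk hY), hmap,
    hXl, hYl, gaussianReal_conv]


end AuxiliaryLemmas

/-- Stationarity of the discretised Langevin velocity: for every `n ≥ 0` the velocity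
`U_n` has law `N(0, kγ)`. -/
theorem langevin_velocity_stationarity {Ω : Type*} [MeasurableSpace Ω]
    (P : Measure Ω) [IsProbabilityMeasure P]
    (γ k τ : ℝ) (hγ : 0 < γ) (hk : 0 < k) (hτ : 0 < τ)
    (L : DiscreteLangevin P γ k τ) :
    ∀ n : ℕ, P.map (L.U n) = gaussianReal 0 (k * γ).toNNReal := by
  have hγτ : 0 < γ * τ := mul_pos hγ hτ
  set c := Real.exp (-(γ * τ)) with hc
  have hc0 : 0 < c := Real.exp_pos _
  have hc1 : c < 1 := by
    rw [hc, Real.exp_lt_one_iff]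
    linarith
  have hcsq : c ^ 2 = Real.exp (-(2 * γ * τ)) := by
    rw [hc, sq, ← Real.exp_add]
    ring_nf
  have hv2 : 2 * k * γ ^ 2 * τ * phi (2 * γ * τ) = k * γ * (1 - c ^ 2) := by
    rw [phi, hcsq]
    have h2 : (2 : ℝ) * γ * τ ≠ 0 := by positivity
    field_simp
  have hYlaw : ∀ n, P.map (fun ω => (L.ε n ω).2)
      = gaussianReal 0 (k * γ * (1 - c ^ 2)).toNNReal := by
    intro n
    have h := L.law_ε n 0 1
    have hfun : (fun ω => 0 * (L.ε n ω).1 + 1 * (L.ε n ω).2)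
        = fun ω => (L.ε n ω).2 := by
      funext ω; ring
    rw [hfun] at h
    rw [h]
    congr 1
    rw [← hv2]
    ring
  intro n
  induction n with
  | zero => exact L.law_U0
  | succ m ih =>
    have hX : P.map (fun ω => c * L.U m ω)
        = gaussianReal 0 (⟨c ^ 2, sq_nonneg c⟩ * (k * γ).toNNReal) := by
      rw [show (fun ω => c * L.U m ω) = (fun x => c * x) ∘ L.U m from rfl,
        ← Measure.map_map (measurable_const_mul c) (L.meas_U m), ih,
        gaussianReal_map_const_mul, mul_zero]
      rfl
    have hind : IndepFun (fun ω => c * L.U m ω) (fun ω => (L.ε m ω).2) P :=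
      (L.indepFun_U_ε m).comp (measurable_const_mul c) measurable_snd
    have hsum := indep_gauss_add ((L.meas_U m).const_mul c) (L.meas_ε m).snd hind hX (hYlaw m)
    rw [show L.U (m + 1) = fun ω => c * L.U m ω + (L.ε m ω).2 from rfl, hsum]
    congr 1
    apply NNReal.coe_injective
    push_cast
    change c ^ 2 * ((k * γ).toNNReal : ℝ) + ((k * γ * (1 - c ^ 2)).toNNReal : ℝ) = ((k * γ).toNNReal : ℝ)
    rw [Real.coe_toNNReal _ (by positivity),
      Real.coe_toNNReal _ (mul_nonneg (by positivity) (by nlinarith))]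
    ring
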